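/- Let K ≥ 1, β > 0, and for each client k ∈ {1,…,K} let F_k be an N_k×m real matrix and Y_k an N_k×d real matrix. Define C_k = FₖᵀFₖ + βI, L̂_k = C_k⁻¹FₖᵀY_k, S_k = Σ_{i=1}^k C_i, μ_k = S_k⁻¹S_{k−1}, ν_k = S_k⁻¹C_k, and the recursion M₀ = 0, M_k = μ_k M_{k−1} + ν_k L̂_k. Then the final knowledge fusion matrix has the closed form M_K = (Σ_{k=1}^K FₖᵀFₖ + Kβ I)⁻¹ (Σ_{k=1}^K FₖᵀY_k). -/
import Mathlib


open Matrix

theorem stmt_8 (m d K : ℕ) (hK : 1 ≤ K) (β : ℝ) (hβ : 0 < β)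
    (N : ℕ → ℕ)
    (F : (k : ℕ) → Matrix (Fin (N k)) (Fin m) ℝ)
    (Y : (k : ℕ) → Matrix (Fin (N k)) (Fin d) ℝ)
    (C : ℕ → Matrix (Fin m) (Fin m) ℝ)
    (hC : ∀ k, C k = (F k)ᵀ * F k + β • (1 : Matrix (Fin m) (Fin m) ℝ))
    (L : ℕ → Matrix (Fin m) (Fin d) ℝ)
    (hL : ∀ k, L k = (C k)⁻¹ * ((F k)ᵀ * Y k))
    (S : ℕ → Matrix (Fin m) (Fin m) ℝ)
    (hS : ∀ k, S k = ∑ i ∈ Finset.Icc 1 k, C i)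
    (μ ν : ℕ → Matrix (Fin m) (Fin m) ℝ)
    (hμ : ∀ k, μ k = (S k)⁻¹ * S (k - 1))
    (hν : ∀ k, ν k = (S k)⁻¹ * C k)
    (M : ℕ → Matrix (Fin m) (Fin d) ℝ)
    (hM0 : M 0 = 0)
    (hMrec : ∀ k, 1 ≤ k → k ≤ K → M k = μ k * M (k - 1) + ν k * L k) :
    M K = (∑ k ∈ Finset.Icc 1 K, (F k)ᵀ * F k +
          ((K : ℝ) * β) • (1 : Matrix (Fin m) (Fin m) ℝ))⁻¹ *
        ∑ k ∈ Finset.Icc 1 K, (F k)ᵀ * Y k := by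
  have hCpd : ∀ k, (C k).PosDef := fun k => by
    rw [hC k]
    refine Matrix.PosDef.posSemidef_add ?_ ?_
    · have := Matrix.posSemidef_conjTranspose_mul_self (F k)
      rwa [Matrix.conjTranspose_eq_transpose_of_trivial] at this
    · rw [Matrix.smul_one_eq_diagonal]
      exact Matrix.PosDef.diagonal (fun _ => hβ)
  have hCinv : ∀ k, C k * (C k)⁻¹ = 1 := fun k =>
    Matrix.mul_nonsing_inv _ ((Matrix.isUnit_iff_isUnit_det _).mp (hCpd k).isUnit)
  have hSpd : ∀ k, 1 ≤ k → (S k).PosDef := by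
    intro k hk
    induction k with
    | zero => omega
    | succ n ih =>
      rcases Nat.eq_or_lt_of_le hk with h | h
      · rw [hS, ← h]
        simpa using hCpd 1
      · have hn : 1 ≤ n := by omega
        have : S (n + 1) = S n + C (n + 1) := by
          rw [hS, hS, Finset.sum_Icc_succ_top (by omega : 1 ≤ n + 1)]
        rw [this]
        exact (ih hn).add (hCpd (n + 1))
  have hSinv : ∀ k, 1 ≤ k → S k * (S k)⁻¹ = 1 := fun k hk =>
    Matrix.mul_nonsing_inv _ ((Matrix.isUnit_iff_isUnit_det _).mp (hSpd k hk).isUnit)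
  have key : ∀ k, 1 ≤ k → k ≤ K →
      M k = (S k)⁻¹ * ∑ i ∈ Finset.Icc 1 k, (F i)ᵀ * Y i := by
    intro k hk hkK
    induction k with
    | zero => omega
    | succ n ih =>
      rw [hMrec (n + 1) hk hkK, hμ, hν, hL, Nat.add_sub_cancel]
      rcases Nat.eq_zero_or_pos n with rfl | hn
      · rw [hM0, Matrix.mul_zero, zero_add, Finset.Icc_self, Finset.sum_singleton,
          Matrix.mul_assoc, ← Matrix.mul_assoc (C 1), hCinv 1, Matrix.one_mul]
      · rw [ih hn (by omega)]
        rw [Finset.sum_Icc_succ_top (by omega : 1 ≤ n + 1), Matrix.mul_add]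
        congr 1
        · rw [Matrix.mul_assoc, ← Matrix.mul_assoc (S n), hSinv n hn, Matrix.one_mul]
        · rw [Matrix.mul_assoc, ← Matrix.mul_assoc (C (n + 1)), hCinv (n + 1), Matrix.one_mul]
  have hSK : S K = ∑ k ∈ Finset.Icc 1 K, (F k)ᵀ * F k +
      ((K : ℝ) * β) • (1 : Matrix (Fin m) (Fin m) ℝ) := by
    rw [hS]
    simp_rw [hC]
    rw [Finset.sum_add_distrib, Finset.sum_const, Nat.card_Icc]
    congr 1
    rw [← Nat.cast_smul_eq_nsmul ℝ, smul_smul]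
    norm_num
  rw [key K hK le_rfl, hSK]
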